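/- arXiv:2312.13755 — 2 statements merged into one kernel-verified Lean document; each statement's English description precedes it below -/
import Mathlib

section
/- Let A be an abelian category and 𝒞 ⊆ A a full additive subcategory such that mod 𝒞 is abelian and 𝒞 generates A. Then every F ∈ mod A admits a morphism F' → F such that F' belongs to mod 𝒞 (viewed inside mod A via the inclusion-induced functor) and such that the image of F' → F under the exact quotient functor mod A → A (the left adjoint of the Yoneda embedding) is an isomorphism. -/
open CategoryTheory Limits

universe v u w

namespace CoherentFunctors

variable (𝒞 : Type u) [Category.{v} 𝒞] [Preadditive 𝒞]

/-- The ambient category of `AddCommGrp`-valued presheaves on `𝒞`. -/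
abbrev Amb := 𝒞ᵒᵖ ⥤ AddCommGrpCat.{v}

variable {𝒞}

/-- A presheaf `F : 𝒞ᵒᵖ ⥤ Ab` is finitely presented (coherent) if it admits a presentation
`Hom(-,X) ⟶ Hom(-,Y) ⟶ F ⟶ 0`, i.e. it is a cokernel of a map between representables. -/
def IsFP (F : Amb 𝒞) : Prop :=
  ∃ (X Y : 𝒞) (f : X ⟶ Y),
    Nonempty (cokernel (preadditiveYoneda.map f) ≅ F)

variable (𝒞)

/-- The category `mod 𝒞` of finitely presented (coherent) functors `𝒞ᵒᵖ ⥤ Ab`. -/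
abbrev ModC := ObjectProperty.FullSubcategory (IsFP (𝒞 := 𝒞))

/-- The Yoneda functor `𝒞 ⥤ mod 𝒞`, `X ↦ Hom(-,X)`. -/
noncomputable def yonedaFP : 𝒞 ⥤ ModC 𝒞 :=
  ObjectProperty.lift _ preadditiveYoneda (fun X =>
    ⟨X, X, 0, ⟨by
      refine (cokernelIsoOfEq ?_).trans cokernelZeroIsoTarget
      simp⟩⟩)

/-- The canonical forgetful (inclusion) functor `mod 𝒞 ⥤ (𝒞ᵒᵖ ⥤ Ab)`. -/
abbrev modIncl : ModC 𝒞 ⥤ Amb 𝒞 := ObjectProperty.ι _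

variable {𝒞}

/-- `f : X ⟶ Y` is a weak kernel of `g : Y ⟶ Z` if the sequence
`Hom(C,X) → Hom(C,Y) → Hom(C,Z)` is exact for every `C`. -/
def IsWeakKernel {X Y Z : 𝒞} (f : X ⟶ Y) (g : Y ⟶ Z) : Prop :=
  f ≫ g = 0 ∧ ∀ ⦃T : 𝒞⦄ (h : T ⟶ Y), h ≫ g = 0 → ∃ k : T ⟶ X, k ≫ f = h

variable (𝒞)

/-- Every morphism of `𝒞` admits a weak kernel. -/
def HasWeakKernels : Prop :=
  ∀ ⦃Y Z : 𝒞⦄ (g : Y ⟶ Z), ∃ (X : 𝒞) (f : X ⟶ Y), IsWeakKernel f g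

/-- The statement that `mod 𝒞` is an abelian category
(with respect to its canonical preadditive structure). -/
def ModCIsAbelian : Prop :=
  ∃ a : Abelian (ModC 𝒞), a.toPreadditive = Preadditive.fullSubcategory _

/-- A functor preserves cokernels. -/
def PreservesCokernels {D : Type*} [Category D] {E : Type*} [Category E]
    [Limits.HasZeroMorphisms D] (T : D ⥤ E) : Prop :=
  ∀ ⦃X Y : D⦄ (f : X ⟶ Y), PreservesColimit (parallelPair f 0) T

end CoherentFunctors

namespace CoherentFunctors

open ZeroObject

variable {A : Type u} [Category.{v} A] [Abelian A] (P : A → Prop)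

/-- The full subcategory of `A` determined by the predicate `P`. -/
abbrev Sub := ObjectProperty.FullSubcategory P

/-- The inclusion functor of the full subcategory determined by `P`. -/
abbrev subIncl : Sub P ⥤ A := ObjectProperty.ι P

/-- The full subcategory determined by `P` generates `A` if every object of `A`
admits an epimorphism from an object satisfying `P`. -/
def Generates : Prop := ∀ X : A, ∃ (C : A), P C ∧ ∃ p : C ⟶ X, Epi p

/-- A functor on the subcategory `𝒞 = P` belongs to `eff(A,𝒞) = mod 𝒞 ∩ eff A` iff it admits
a presentation by a morphism of `𝒞` which is an epimorphism in `A`. -/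
def IsEffRel (F : Amb (Sub P)) : Prop :=
  ∃ (X Y : Sub P) (f : X ⟶ Y), Epi ((subIncl P).map f) ∧
    Nonempty (cokernel (preadditiveYoneda.map f) ≅ F)

/-- The class of morphisms of `mod 𝒞` whose kernel and cokernel lie in `eff(A,𝒞)`;
inverting them realizes the Serre quotient `(mod 𝒞)/(eff(A,𝒞))`. -/
noncomputable def effRelW : MorphismProperty (ModC (Sub P)) :=
  fun _ _ φ => IsEffRel P (kernel ((modIncl (Sub P)).map φ)) ∧
    IsEffRel P (cokernel ((modIncl (Sub P)).map φ))

/-- The subcategory determined by `P` is contravariantly finite in `A`: every object of `A`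
admits a right `P`-approximation. -/
def ContravariantlyFinite : Prop :=
  ∀ X : A, ∃ (C : A) (_ : P C) (π : C ⟶ X),
    ∀ (C' : A) (_ : P C') (g : C' ⟶ X), ∃ h : C' ⟶ C, h ≫ π = g

end CoherentFunctors

open CoherentFunctors ZeroObject

namespace CoherentFunctors

variable {A : Type u} [Category.{v} A] [Abelian A] (P : A → Prop)

/-- A presheaf on `A` lies in (the essential image of) `mod 𝒞 ⊆ mod A` iff it admits a
presentation by a morphism between objects of the subcategory `𝒞` determined by `P`. -/
def IsInModSub (F : Amb A) : Prop :=
  ∃ (X Y : Sub P) (f : X ⟶ Y),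
    Nonempty (cokernel (preadditiveYoneda.map ((subIncl P).map f)) ≅ F)

end CoherentFunctors


section Auxiliary

open CategoryTheory.Abelian

attribute [local instance] CategoryTheory.Abelian.Pseudoelement.objectToSort
  CategoryTheory.Abelian.Pseudoelement.homToFun

/-- In an abelian category, given `f : X ⟶ Y`, an epi `q : Q ⟶ Y` and an epi
`e : P₁ ⟶ pullback f q`, the induced map `cokernel (e ≫ snd) ⟶ cokernel f` is an iso. -/
lemma isIso_cokernelMap_of_pullback {A : Type u} [Category.{v} A] [Abelian A]
    {X Y Q P₁ : A} (f : X ⟶ Y) (q : Q ⟶ Y) [Epi q] (e : P₁ ⟶ pullback f q) [Epi e]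
    (w : (e ≫ pullback.snd f q) ≫ q = (e ≫ pullback.fst f q) ≫ f) :
    IsIso (cokernel.map (e ≫ pullback.snd f q) f (e ≫ pullback.fst f q) q w) := by
  set g : P₁ ⟶ Q := e ≫ pullback.snd f q with hg
  set c : cokernel g ⟶ cokernel f := cokernel.map g f (e ≫ pullback.fst f q) q w with hc
  have hfac : cokernel.π g ≫ c = q ≫ cokernel.π f := cokernel.π_desc _ _ _
  haveI : Epi c := by
    haveI : Epi (q ≫ cokernel.π f) := epi_comp _ _
    exact epi_of_epi_fac hfac
  haveI : Mono c := by
    apply Pseudoelement.mono_of_zero_of_map_zero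
    intro x hx
    obtain ⟨y, rfl⟩ := Pseudoelement.pseudo_surjective_of_epi (cokernel.π g) x
    have h1 : (cokernel.π f) (q y) = 0 := by
      rw [← Pseudoelement.comp_apply, ← hfac, Pseudoelement.comp_apply]
      exact hx
    obtain ⟨z, hz⟩ := Pseudoelement.pseudo_exact_of_exact (ShortComplex.exact_cokernel f) (q y) h1
    obtain ⟨s, hs1, hs2⟩ := Pseudoelement.pseudo_pullback hz
    rw [← hs2]
    have hz0 : pullback.snd f q ≫ cokernel.π g = 0 := by
      rw [← cancel_epi e, comp_zero, ← Category.assoc]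
      exact cokernel.condition g
    calc (cokernel.π g) ((pullback.snd f q) s)
        = (pullback.snd f q ≫ cokernel.π g) s := (Pseudoelement.comp_apply _ _ _).symm
      _ = (0 : pullback f q ⟶ cokernel g) s := by rw [hz0]
      _ = 0 := Pseudoelement.zero_apply _ _
  exact isIso_of_mono_of_epi c

variable {A : Type u} [Category.{v} A] [Abelian A]

lemma preadditiveYoneda_map_zero (X T : A) :
    preadditiveYoneda.map (0 : X ⟶ T) = 0 := by
  ext c g
  show (g ≫ 0 : _ ⟶ _) = _
  simp
  exact comp_zero

/-- The canonical map `Hom_A(cokernel u, T) → Hom(cokernel (Hom(-,u)), Hom(-,T))`. -/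
noncomputable def cokernelHomTransfer {X Y : A} (u : X ⟶ Y) (T : A)
    (s : cokernel u ⟶ T) :
    cokernel (preadditiveYoneda.map u) ⟶ preadditiveYoneda.obj T :=
  cokernel.desc _ (preadditiveYoneda.map (cokernel.π u ≫ s)) (by
    rw [← Functor.map_comp, cokernel.condition_assoc, zero_comp,
      preadditiveYoneda_map_zero])

lemma cokernelHomTransfer_bijective {X Y : A} (u : X ⟶ Y) (T : A) :
    Function.Bijective (cokernelHomTransfer u T) := by
  constructor
  · intro s s' h
    have h2 : preadditiveYoneda.map (cokernel.π u ≫ s)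
        = preadditiveYoneda.map (cokernel.π u ≫ s') := by
      have h1 := congrArg (fun t => cokernel.π (preadditiveYoneda.map u) ≫ t) h
      simpa [cokernelHomTransfer] using h1
    exact (cancel_epi (cokernel.π u)).1 (preadditiveYoneda.map_injective h2)
  · intro t
    set t₀ : Y ⟶ T :=
      preadditiveYoneda.preimage (cokernel.π (preadditiveYoneda.map u) ≫ t) with ht₀
    have himg : preadditiveYoneda.map t₀ = cokernel.π (preadditiveYoneda.map u) ≫ t :=
      preadditiveYoneda.map_preimage _
    have hcond : u ≫ t₀ = 0 := by
      apply preadditiveYoneda.map_injective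
      rw [Functor.map_comp, himg, cokernel.condition_assoc, zero_comp,
        preadditiveYoneda_map_zero]
    refine ⟨cokernel.desc u t₀ hcond, ?_⟩
    apply (cancel_epi (cokernel.π (preadditiveYoneda.map u))).1
    simp [cokernelHomTransfer, himg]

lemma cokernelHomTransfer_square {X Y X' Y' : A} (u : X ⟶ Y) (v : X' ⟶ Y')
    (p : X ⟶ X') (r : Y ⟶ Y') (w : u ≫ r = p ≫ v) {T : A} (s : cokernel v ⟶ T) :
    cokernel.map (preadditiveYoneda.map u) (preadditiveYoneda.map v)
        (preadditiveYoneda.map p) (preadditiveYoneda.map r)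
        (by rw [← Functor.map_comp, ← Functor.map_comp, w]) ≫ cokernelHomTransfer v T s
      = cokernelHomTransfer u T (cokernel.map u v p r w ≫ s) := by
  apply (cancel_epi (cokernel.π (preadditiveYoneda.map u))).1
  simp [cokernelHomTransfer, ← Functor.map_comp]

end Auxiliary

/-- Let `A` be an abelian category and `𝒞 ⊆ A` a full additive subcategory
such that `mod 𝒞` is abelian and `𝒞` generates `A`. Then every `F ∈ mod A` admits a morphism
`F' ⟶ F` with `F' ∈ mod 𝒞` whose image under the exact left adjoint `mod A ⥤ A` of the Yoneda
embedding is an isomorphism. -/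
theorem statement8 (A : Type u) [Category.{v} A] [Abelian A] (P : A → Prop)
    (hP0 : P 0) (hPadd : ∀ X Y : A, P X → P Y → P (X ⊞ Y))
    (habel : ModCIsAbelian (Sub P)) (hgen : Generates P)
    (L : ModC A ⥤ A) (adj : L ⊣ yonedaFP A) :
    ∀ F : ModC A, ∃ (F' : ModC A) (φ : F' ⟶ F),
      IsInModSub P F'.obj ∧ IsIso (L.map φ) := by
  intro F
  obtain ⟨X, Y, f, ⟨ι⟩⟩ := F.2
  obtain ⟨Q, hQ, q, hq⟩ := hgen Y
  haveI : Epi q := hq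
  obtain ⟨P₁, hP₁, e, he⟩ := hgen (pullback f q)
  haveI : Epi e := he
  set g : P₁ ⟶ Q := e ≫ pullback.snd f q with hgdef
  set a : P₁ ⟶ X := e ≫ pullback.fst f q with hadef
  have w : g ≫ q = a ≫ f := by
    rw [hgdef, hadef, Category.assoc, Category.assoc, pullback.condition]
  haveI hciso : IsIso (cokernel.map g f a q w) :=
    isIso_cokernelMap_of_pullback f q e w
  set F' : ModC A := ⟨cokernel (preadditiveYoneda.map g), P₁, Q, g, ⟨Iso.refl _⟩⟩ with hF'
  set φ₀ : cokernel (preadditiveYoneda.map g) ⟶ cokernel (preadditiveYoneda.map f) :=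
    cokernel.map (preadditiveYoneda.map g) (preadditiveYoneda.map f)
      (preadditiveYoneda.map a) (preadditiveYoneda.map q)
      (by rw [← Functor.map_comp, ← Functor.map_comp, w]) with hφ₀
  set φ : F' ⟶ F := ObjectProperty.homMk (φ₀ ≫ ι.hom : F'.obj ⟶ F.obj) with hφ
  refine ⟨F', φ, ⟨⟨P₁, hP₁⟩, ⟨Q, hQ⟩, ObjectProperty.homMk g, ⟨Iso.refl _⟩⟩, ?_⟩
  -- bijectivity of precomposition with `φ` on morphisms into representables
  have hbij0 : ∀ T : A, Function.Bijective
      (fun t : (F.obj ⟶ (preadditiveYoneda.obj T : Amb A)) => (φ₀ ≫ ι.hom) ≫ t) := by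
    intro T
    have h1 : Function.Bijective
        (fun t : (F.obj ⟶ (preadditiveYoneda.obj T : Amb A)) => ι.hom ≫ t) :=
      ⟨fun s s' h => by simpa using congrArg (fun t => ι.inv ≫ t) h,
       fun t => ⟨ι.inv ≫ t, by simp⟩⟩
    have h2 : Function.Bijective
        (fun r : (cokernel (preadditiveYoneda.map f) ⟶ (preadditiveYoneda.obj T : Amb A)) =>
          φ₀ ≫ r) := by
      have hcbij : Function.Bijective
          (fun s : (cokernel f ⟶ T) => cokernel.map g f a q w ≫ s) :=
        ⟨fun s s' h => by
          have := congrArg (fun t => inv (cokernel.map g f a q w) ≫ t) h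
          simpa using this,
         fun s => ⟨inv (cokernel.map g f a q w) ≫ s, by simp⟩⟩
      have heq : (fun r : (cokernel (preadditiveYoneda.map f) ⟶
              (preadditiveYoneda.obj T : Amb A)) => φ₀ ≫ r) ∘ (cokernelHomTransfer f T)
          = (cokernelHomTransfer g T) ∘ (fun s : (cokernel f ⟶ T) =>
              cokernel.map g f a q w ≫ s) := by
        funext s
        exact cokernelHomTransfer_square g f a q w s
      set eB := Equiv.ofBijective _ (cokernelHomTransfer_bijective f T) with heB
      have hcomp : (fun r : (cokernel (preadditiveYoneda.map f) ⟶
              (preadditiveYoneda.obj T : Amb A)) => φ₀ ≫ r)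
          = ((cokernelHomTransfer g T) ∘ (fun s : (cokernel f ⟶ T) =>
              cokernel.map g f a q w ≫ s)) ∘ eB.symm := by
        funext r
        have h4 : cokernelHomTransfer f T (eB.symm r) = r := eB.apply_symm_apply r
        have h3 := congrFun heq (eB.symm r)
        simp only [Function.comp_apply] at h3 ⊢
        conv_lhs => rw [← h4]
        exact h3
      rw [hcomp]
      exact (((cokernelHomTransfer_bijective g T).comp hcbij).comp eB.symm.bijective)
    have hsplit : (fun t : (F.obj ⟶ (preadditiveYoneda.obj T : Amb A)) =>
        (φ₀ ≫ ι.hom) ≫ t)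
        = (fun r : (cokernel (preadditiveYoneda.map f) ⟶
            (preadditiveYoneda.obj T : Amb A)) => φ₀ ≫ r)
          ∘ (fun t : (F.obj ⟶ (preadditiveYoneda.obj T : Amb A)) => ι.hom ≫ t) := by
      funext t
      simp
    rw [hsplit]
    exact h2.comp h1
  have hbij : ∀ T : A, Function.Bijective
      (fun t : (F ⟶ (yonedaFP A).obj T) => (φ ≫ t : F' ⟶ (yonedaFP A).obj T)) :=
    fun T => ⟨fun t t' h => ObjectProperty.hom_ext _
        ((hbij0 T).1 (congrArg (fun x => x.hom) h : _)), fun s => by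
      obtain ⟨t0, ht0⟩ := (hbij0 T).2 s.hom
      exact ⟨ObjectProperty.homMk t0, ObjectProperty.hom_ext _ ht0⟩⟩
  have hbijL : ∀ T : A, Function.Bijective
      (fun t : (L.obj F ⟶ T) => L.map φ ≫ t) := by
    intro T
    have hconj : (fun t : (L.obj F ⟶ T) => L.map φ ≫ t)
        = (adj.homEquiv F' T).symm ∘ (fun s : (F ⟶ (yonedaFP A).obj T) =>
            (φ ≫ s : F' ⟶ (yonedaFP A).obj T)) ∘ (adj.homEquiv F T) := by
      funext t
      apply (adj.homEquiv F' T).injective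
      simp [Adjunction.homEquiv_naturality_left]
    rw [hconj]
    exact ((adj.homEquiv F' T).symm.bijective.comp
      ((hbij T).comp (adj.homEquiv F T).bijective))
  obtain ⟨ψ, hψ⟩ := (hbijL (L.obj F')).2 (𝟙 _)
  have hψ' : L.map φ ≫ ψ = 𝟙 _ := hψ
  have hψ2 : ψ ≫ L.map φ = 𝟙 _ := by
    apply (hbijL (L.obj F)).1
    show L.map φ ≫ ψ ≫ L.map φ = L.map φ ≫ 𝟙 _
    rw [← Category.assoc, hψ', Category.id_comp, Category.comp_id]
  exact ⟨ψ, hψ', hψ2⟩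
end

section
/- Let A be an abelian category and 𝒞 ⊆ A a full additive subcategory. The right exact functor mod 𝒞 → A extending the inclusion 𝒞 → A admits a right adjoint if and only if 𝒞 is contravariantly finite in A; in that case the right adjoint is given by X ↦ Hom(−,X)|_𝒞, and 𝒞 is contravariantly finite if and only if Hom(−,X)|_𝒞 belongs to mod 𝒞 for every X ∈ A. -/
open CategoryTheory Limits

universe v u w

open CoherentFunctors ZeroObject

namespace CoherentFunctors

variable {A : Type u} [Category.{v} A] [Abelian A] (P : A → Prop)

/-- The functor `A ⥤ (𝒞ᵒᵖ ⥤ Ab)`, `X ↦ Hom(-,X)|_𝒞`, restricting the Yoneda presheaf of `X`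
to the full subcategory `𝒞` determined by `P`. -/
noncomputable def restrictedYoneda : A ⥤ Amb (Sub P) :=
  preadditiveYoneda ⋙ (Functor.whiskeringLeft (Sub P)ᵒᵖ Aᵒᵖ AddCommGrpCat.{v}).obj (subIncl P).op

end CoherentFunctors

section Helpers

open Opposite CoherentFunctors

universe v' u'
variable {𝒞 : Type u'} [Category.{v'} 𝒞] [Preadditive 𝒞]

lemma yapp {F : Amb 𝒞} {Cy C : 𝒞} (t : preadditiveYoneda.obj Cy ⟶ F) (n : C ⟶ Cy) :
    t.app (op C) n = F.map n.op (t.app (op Cy) (𝟙 Cy)) := by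
  have h := NatTrans.naturality_apply (φ := t) (f := n.op) (𝟙 Cy)
  have h' : t.app (op C) (n ≫ 𝟙 Cy) = F.map n.op (t.app (op Cy) (𝟙 Cy)) := h
  rwa [Category.comp_id] at h'

lemma yext {F : Amb 𝒞} {Cy : 𝒞} {t t' : preadditiveYoneda.obj Cy ⟶ F}
    (h : t.app (op Cy) (𝟙 Cy) = t'.app (op Cy) (𝟙 Cy)) : t = t' := by
  ext c n
  obtain ⟨c⟩ := c
  rw [yapp t n, yapp t' n, h]

end Helpers
section Present

open Opposite CoherentFunctors

universe v' u'
variable {𝒞 : Type u'} [Category.{v'} 𝒞] [Preadditive 𝒞]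

variable (𝒞) in
structure Pres (M : ModC 𝒞) where
  Yc : 𝒞
  Xc : 𝒞
  f : Xc ⟶ Yc
  p : (yonedaFP 𝒞).obj Yc ⟶ M
  w : (yonedaFP 𝒞).map f ≫ p = 0
  isColim : IsColimit (CokernelCofork.ofπ p w)
  surj : ∀ (c : 𝒞ᵒᵖ), Function.Surjective (((modIncl 𝒞).map p).app c)

set_option synthInstance.maxHeartbeats 800000 in
noncomputable def pres (M : ModC 𝒞) : Pres 𝒞 M := by
  have h := M.property
  let Xc := h.choose
  let Yc := h.choose_spec.choose
  let f : Xc ⟶ Yc := h.choose_spec.choose_spec.choose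
  let σ : cokernel (preadditiveYoneda.map f) ≅ M.obj :=
    h.choose_spec.choose_spec.choose_spec.some
  have w0 : preadditiveYoneda.map f ≫ (cokernel.π (preadditiveYoneda.map f) ≫ σ.hom) = 0 := by
    rw [cokernel.condition_assoc, zero_comp]
  have hc : IsColimit (CokernelCofork.ofπ _ w0) :=
    IsColimit.ofIsoColimit (cokernelIsCokernel _) (Cofork.ext σ rfl)
  refine ⟨Yc, Xc, f, ObjectProperty.homMk (cokernel.π (preadditiveYoneda.map f) ≫ σ.hom),
    (by ext1; exact w0), ?_, ?_⟩
  · exact isColimitOfReflects (modIncl 𝒞)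
      ((CokernelCofork.isColimitMapCoconeEquiv _ (modIncl 𝒞)).symm hc)
  · intro c m
    obtain ⟨n, hn⟩ := (AddCommGrpCat.epi_iff_surjective
      ((cokernel.π (preadditiveYoneda.map f)).app c)).mp inferInstance (σ.inv.app c m)
    refine ⟨n, ?_⟩
    have h2 : σ.hom.app c (σ.inv.app c m) = m := by simp
    have h3 : σ.hom.app c ((cokernel.π (preadditiveYoneda.map f)).app c n) = m := by
      rw [hn]; exact h2
    exact h3

lemma Pres.factor {M : ModC 𝒞} (pr : Pres 𝒞 M) {C : 𝒞} (t : (yonedaFP 𝒞).obj C ⟶ M) :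
    ∃ n : C ⟶ pr.Yc, (yonedaFP 𝒞).map n ≫ pr.p = t := by
  obtain ⟨n, hn⟩ := pr.surj (op C) (((modIncl 𝒞).map t).app (op C) (𝟙 C))
  change C ⟶ pr.Yc at n
  refine ⟨n, ?_⟩
  ext1
  show ((yonedaFP 𝒞).map n ≫ pr.p).hom = t.hom
  apply yext
  have e1 : ((yonedaFP 𝒞).map n ≫ pr.p).hom.app (op C) (𝟙 C)
      = pr.p.hom.app (op C) (𝟙 C ≫ (n : C ⟶ pr.Yc)) := rfl
  refine e1.trans ?_
  rw [Category.id_comp]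
  exact hn

end Present
section LFacts

open Opposite CoherentFunctors

lemma ymap_add {𝒞 : Type u} [Category.{v} 𝒞] [Preadditive 𝒞] {C Cy : 𝒞} (n n' : C ⟶ Cy) :
    preadditiveYoneda.map (n + n') = preadditiveYoneda.map n + preadditiveYoneda.map n' := by
  ext c u
  exact Preadditive.comp_add _ _ _ _ _ _

lemma map_via_p {𝒞 : Type u} [Category.{v} 𝒞] [Preadditive 𝒞] {M : ModC 𝒞} (pr : Pres 𝒞 M)
    {C C'' : 𝒞} (n₀ : C ⟶ pr.Yc) (v : C'' ⟶ C) :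
    M.obj.map v.op (((modIncl 𝒞).map pr.p).app (op C) n₀)
      = ((modIncl 𝒞).map pr.p).app (op C'') (v ≫ n₀) := by
  have h := NatTrans.naturality_apply (φ := (modIncl 𝒞).map pr.p) (f := v.op) n₀
  exact h.symm

variable {A : Type u} [Category.{v} A] [Abelian A] {P : A → Prop}
  (L : ModC (Sub P) ⥤ A)

lemma L_map_y (hL₂ : yonedaFP (Sub P) ⋙ L ≅ subIncl P) {C C' : Sub P} (n : C ⟶ C') :
    L.map ((yonedaFP (Sub P)).map n) = hL₂.hom.app C ≫ (subIncl P).map n ≫ hL₂.inv.app C' := by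
  have h := hL₂.hom.naturality n
  rw [← Category.assoc, ← h]
  simp

lemma L_map_rep_comp_eq (hL₂ : yonedaFP (Sub P) ⋙ L ≅ subIncl P) {M : ModC (Sub P)} (pr : Pres (Sub P) M) {C : Sub P}
    (n : C ⟶ pr.Yc) : L.map ((yonedaFP (Sub P)).map n ≫ pr.p)
      = hL₂.hom.app C ≫ (subIncl P).map n ≫ hL₂.inv.app pr.Yc ≫ L.map pr.p := by
  rw [L.map_comp, L_map_y L hL₂ n]
  simp [Category.assoc]

lemma L_map_add_rep (hL₂ : yonedaFP (Sub P) ⋙ L ≅ subIncl P) {C : Sub P} {M : ModC (Sub P)} (t t' : (yonedaFP (Sub P)).obj C ⟶ M) :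
    L.map (t + t') = L.map t + L.map t' := by
  obtain ⟨n, hn⟩ := (pres M).factor t
  obtain ⟨n', hn'⟩ := (pres M).factor t'
  have hsum : (yonedaFP (Sub P)).map (n + n') ≫ (pres M).p = t + t' := by
    have : (yonedaFP (Sub P)).map (n + n')
        = (yonedaFP (Sub P)).map n + (yonedaFP (Sub P)).map n' := by ext1; exact ymap_add n n'
    rw [this, Preadditive.add_comp, hn, hn']
  rw [← hsum, ← hn, ← hn', L_map_rep_comp_eq L hL₂, L_map_rep_comp_eq L hL₂,
    L_map_rep_comp_eq L hL₂]
  have h5 : (subIncl P).map (n + n') = (subIncl P).map n + (subIncl P).map n' := rfl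
  have h5' : (n + n').hom = n.hom + n'.hom := rfl
  simp [h5, h5', Preadditive.add_comp, Preadditive.comp_add]

lemma L_map_zero_rep (hL₂ : yonedaFP (Sub P) ⋙ L ≅ subIncl P) {C : Sub P} {M : ModC (Sub P)} :
    L.map (0 : (yonedaFP (Sub P)).obj C ⟶ M) = 0 := by
  have h0 : (yonedaFP (Sub P)).map (0 : C ⟶ (pres M).Yc) ≫ (pres M).p = 0 := by
    ext1
    show _ = (0 : preadditiveYoneda.obj C ⟶ M.obj)
    apply yext
    show ((modIncl (Sub P)).map (pres M).p).app (op C) (𝟙 C ≫ (0 : C ⟶ (pres M).Yc)) = _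
    rw [Category.id_comp]
    exact map_zero _
  rw [← h0, L_map_rep_comp_eq L hL₂]
  have : (subIncl P).map (0 : C ⟶ (pres M).Yc) = 0 := rfl
  rw [this, zero_comp, comp_zero]

lemma epi_L_p (hL₁ : PreservesCokernels L) {M : ModC (Sub P)} (pr : Pres (Sub P) M) :
    Epi (L.map pr.p) := by
  haveI := hL₁ ((yonedaFP (Sub P)).map pr.f)
  have hc := isColimitOfPreserves L pr.isColim
  constructor
  intro Z g h hgh
  apply hc.hom_ext
  rintro (_ | _) <;>
    simp only [Functor.mapCocone_ι_app, Cofork.app_zero_eq_comp_π_left, Cofork.π_ofπ,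
      L.map_comp, Category.assoc]
  · rw [hgh]
  · exact hgh

lemma L_pzm (hL₂ : yonedaFP (Sub P) ⋙ L ≅ subIncl P) (hL₁ : PreservesCokernels L) : L.PreservesZeroMorphisms := by
  constructor
  intro M N
  have hp := epi_L_p L hL₁ (pres M)
  have h1 : (pres M).p ≫ (0 : M ⟶ N) = (0 : (yonedaFP (Sub P)).obj (pres M).Yc ⟶ N) :=
    comp_zero
  have h2 := congrArg L.map h1
  rw [L.map_comp, L_map_zero_rep L hL₂ (C := (pres M).Yc) (M := N)] at h2
  exact (cancel_epi (L.map (pres M).p)).mp (by rw [h2, comp_zero])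

end LFacts
section YE

open Opposite CoherentFunctors

universe v' u'
variable {𝒞 : Type u'} [Category.{v'} 𝒞] [Preadditive 𝒞]

lemma map_add_fp {M : ModC 𝒞} {C C'' : 𝒞} (m : M.obj.obj (op C)) (v v' : C'' ⟶ C) :
    M.obj.map (v + v').op m = M.obj.map v.op m + M.obj.map v'.op m := by
  obtain ⟨n₀, hn₀⟩ := (pres M).surj (op C) m
  change C ⟶ (pres M).Yc at n₀
  rw [← hn₀, map_via_p (pres M) n₀ (v + v'), map_via_p (pres M) n₀ v,
    map_via_p (pres M) n₀ v', Preadditive.add_comp]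
  exact map_add _ _ _

/-- The morphism `Hom(-,C) ⟶ M` corresponding to an element `m ∈ M(C)`. -/
noncomputable def yE {M : ModC 𝒞} (C : 𝒞) (m : M.obj.obj (op C)) : (yonedaFP 𝒞).obj C ⟶ M :=
  ObjectProperty.homMk (show preadditiveYoneda.obj C ⟶ M.obj from
  { app := fun c => AddCommGrpCat.ofHom (AddMonoidHom.mk'
      (fun n => M.obj.map (n : unop c ⟶ C).op m) (fun n n' => map_add_fp m n n'))
    naturality := by
      intro c c' u
      ext n
      change unop c ⟶ C at n
      show M.obj.map ((u.unop ≫ (n : unop c ⟶ C)) : unop c' ⟶ C).op m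
        = M.obj.map u (M.obj.map (n : unop c ⟶ C).op m)
      rw [op_comp, Functor.map_comp]
      rfl })

lemma yE_app {M : ModC 𝒞} {C : 𝒞} (m : M.obj.obj (op C)) {C'' : 𝒞} (n : C'' ⟶ C) :
    ((modIncl 𝒞).map (yE C m)).app (op C'') n = M.obj.map n.op m := rfl

lemma yE_self {M : ModC 𝒞} {C : 𝒞} (m : M.obj.obj (op C)) :
    ((modIncl 𝒞).map (yE C m)).app (op C) (𝟙 C) = m := by
  show M.obj.map (𝟙 C).op m = m
  simp

lemma yE_comp_left {M : ModC 𝒞} {C C' : 𝒞} (v : C' ⟶ C) (m : M.obj.obj (op C)) :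
    (yonedaFP 𝒞).map v ≫ yE C m = yE C' (M.obj.map v.op m) := by
  ext1
  show ((yonedaFP 𝒞).map v ≫ yE C m).hom = (yE C' (M.obj.map v.op m)).hom
  apply yext
  show M.obj.map (𝟙 C' ≫ v).op m = M.obj.map (𝟙 C').op (M.obj.map v.op m)
  rw [Category.id_comp]
  simp

lemma yE_comp_right {M N : ModC 𝒞} {C : 𝒞} (m : M.obj.obj (op C)) (u : M ⟶ N) :
    yE C m ≫ u = yE C (((modIncl 𝒞).map u).app (op C) m) := by
  ext1
  show (yE C m ≫ u).hom = _
  apply yext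
  show ((modIncl 𝒞).map u).app (op C) (M.obj.map (𝟙 C).op m)
    = N.obj.map (𝟙 C).op (((modIncl 𝒞).map u).app (op C) m)
  simp

lemma yE_add {M : ModC 𝒞} {C : 𝒞} (m m' : M.obj.obj (op C)) :
    yE C (m + m') = yE C m + yE C m' := by
  ext1
  show (yE C (m + m')).hom = (yE C m + yE C m').hom
  apply yext
  show M.obj.map (𝟙 C).op (m + m') = _
  rw [map_add]
  rfl

lemma yE_p {M : ModC 𝒞} (pr : Pres 𝒞 M) :
    yE pr.Yc (((modIncl 𝒞).map pr.p).app (op pr.Yc) (𝟙 pr.Yc)) = pr.p := by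
  ext1
  apply yext
  exact yE_self _

lemma yE_p_lift {M : ModC 𝒞} (pr : Pres 𝒞 M) {C : 𝒞} (n₀ : C ⟶ pr.Yc) :
    yE C (((modIncl 𝒞).map pr.p).app (op C) n₀) = (yonedaFP 𝒞).map n₀ ≫ pr.p := by
  conv_rhs => rw [← yE_p pr, yE_comp_left]
  congr 1
  rw [map_via_p pr (𝟙 pr.Yc) n₀, Category.comp_id]

end YE
section FPofCF

open Opposite CoherentFunctors

variable {A : Type u} [Category.{v} A] [Abelian A] {P : A → Prop}

lemma fp_of_cf (hcf : ContravariantlyFinite P) (X : A) :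
    IsFP ((restrictedYoneda P).obj X) := by
  obtain ⟨C, hC, π, hπ⟩ := hcf X
  obtain ⟨D, hD, ρ, hρ⟩ := hcf (kernel π)
  let Cs : Sub P := ⟨C, hC⟩
  let Ds : Sub P := ⟨D, hD⟩
  let f : Ds ⟶ Cs := ObjectProperty.homMk (ρ ≫ kernel.ι π)
  let τ : preadditiveYoneda.obj Cs ⟶ (restrictedYoneda P).obj X :=
    { app := fun c => AddCommGrpCat.ofHom (AddMonoidHom.mk'
        (fun g => (subIncl P).map (g : unop c ⟶ Cs) ≫ π)
        (fun g g' => by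
          show (subIncl P).map (g + g') ≫ π = _
          have : (subIncl P).map (g + g') = (subIncl P).map g + (subIncl P).map g' := rfl
          rw [this, Preadditive.add_comp]; rfl))
      naturality := by
        intro c c' u
        ext g
        change unop c ⟶ Cs at g
        show (subIncl P).map (u.unop ≫ (g : unop c ⟶ Cs)) ≫ π
          = (subIncl P).map u.unop ≫ ((subIncl P).map (g : unop c ⟶ Cs) ≫ π)
        rw [(subIncl P).map_comp, Category.assoc] }
  have w : preadditiveYoneda.map f ≫ τ = 0 := by
    ext c g
    change unop c ⟶ Ds at g
    show (subIncl P).map ((g : unop c ⟶ Ds) ≫ f) ≫ π = 0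
    rw [(subIncl P).map_comp]
    have : (subIncl P).map f = ρ ≫ kernel.ι π := rfl
    rw [this, Category.assoc, Category.assoc, kernel.condition, comp_zero, comp_zero]
  have hcolim : IsColimit (CokernelCofork.ofπ τ w) := by
    apply evaluationJointlyReflectsColimits
    intro c
    refine (CokernelCofork.isColimitMapCoconeEquiv (CokernelCofork.ofπ τ w)
      ((evaluation (Sub P)ᵒᵖ AddCommGrpCat.{v}).obj c)).symm ?_
    let S : ShortComplex AddCommGrpCat.{v} :=
      ShortComplex.mk ((preadditiveYoneda.map f).app c) (τ.app c)
        (by rw [← NatTrans.comp_app, w]; rfl)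
    have hS : S.Exact := by
      rw [ShortComplex.ab_exact_iff]
      intro x hx
      change unop c ⟶ Cs at x
      have hx' : (subIncl P).map (x : unop c ⟶ Cs) ≫ π = 0 := hx
      obtain ⟨h, hh⟩ := hρ (unop c).obj (unop c).property
        (kernel.lift π ((subIncl P).map (x : unop c ⟶ Cs)) hx')
      refine ⟨(ObjectProperty.homMk h : unop c ⟶ Ds), ?_⟩
      change (ObjectProperty.homMk h : unop c ⟶ Ds) ≫ f = x
      ext1
      show h ≫ (ρ ≫ kernel.ι π) = ((subIncl P).map (x : unop c ⟶ Cs) : _)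
      rw [← Category.assoc, hh, kernel.lift_ι]
    haveI : Epi S.g := (AddCommGrpCat.epi_iff_surjective _).mpr (by
      intro g
      obtain ⟨h, hh⟩ := hπ (unop c).obj (unop c).property g
      exact ⟨(ObjectProperty.homMk h : unop c ⟶ Cs), hh⟩)
    exact hS.gIsCokernel
  exact ⟨Ds, Cs, f,
    ⟨(cokernelIsCokernel (preadditiveYoneda.map f)).coconePointUniqueUpToIso hcolim⟩⟩

end FPofCF
section CFback

open Opposite CoherentFunctors

variable {A : Type u} [Category.{v} A] [Abelian A] {P : A → Prop}

lemma cf_of_fp (h : ∀ X : A, IsFP ((restrictedYoneda P).obj X)) : ContravariantlyFinite P := by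
  intro X
  let M : ModC (Sub P) := ⟨(restrictedYoneda P).obj X, h X⟩
  let pr := pres M
  let π : pr.Yc.obj ⟶ X := ((modIncl (Sub P)).map pr.p).app (op pr.Yc) (𝟙 pr.Yc)
  refine ⟨pr.Yc.obj, pr.Yc.property, π, ?_⟩
  intro C' hC' g
  obtain ⟨n, hn⟩ := pr.surj (op (⟨C', hC'⟩ : Sub P))
    (show M.obj.obj (op (⟨C', hC'⟩ : Sub P)) from g)
  refine ⟨(subIncl P).map (n : (⟨C', hC'⟩ : Sub P) ⟶ pr.Yc), ?_⟩
  have h1 := yapp (F := M.obj) ((modIncl (Sub P)).map pr.p) (n : (⟨C', hC'⟩ : Sub P) ⟶ pr.Yc)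
  have h2 : (subIncl P).map (n : (⟨C', hC'⟩ : Sub P) ⟶ pr.Yc) ≫ π
      = M.obj.map (n : (⟨C', hC'⟩ : Sub P) ⟶ pr.Yc).op π := rfl
  rw [h2]
  exact h1.symm.trans hn

lemma cf_of_adj (L : ModC (Sub P) ⥤ A) (hL₂ : yonedaFP (Sub P) ⋙ L ≅ subIncl P)
    {Radj : A ⥤ ModC (Sub P)} (adj : L ⊣ Radj) : ContravariantlyFinite P := by
  intro X
  let M := Radj.obj X
  let pr := pres M
  let π : pr.Yc.obj ⟶ X :=
    hL₂.inv.app pr.Yc ≫ (adj.homEquiv ((yonedaFP (Sub P)).obj pr.Yc) X).symm pr.p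
  refine ⟨pr.Yc.obj, pr.Yc.property, π, ?_⟩
  intro C' hC' g
  let Cs' : Sub P := ⟨C', hC'⟩
  let gg : (yonedaFP (Sub P)).obj Cs' ⟶ M :=
    (adj.homEquiv ((yonedaFP (Sub P)).obj Cs') X)
      (show L.obj ((yonedaFP (Sub P)).obj Cs') ⟶ X from hL₂.hom.app Cs' ≫ g)
  obtain ⟨n, hn⟩ := pr.factor gg
  refine ⟨(subIncl P).map n, ?_⟩
  have h1 := congrArg (adj.homEquiv ((yonedaFP (Sub P)).obj Cs') X).symm hn
  rw [Adjunction.homEquiv_naturality_left_symm, Equiv.symm_apply_apply,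
    L_map_y L hL₂ n, Category.assoc, Category.assoc] at h1
  have h3 := (cancel_epi (hL₂.hom.app Cs')).mp h1
  show (subIncl P).map n ≫ hL₂.inv.app pr.Yc ≫ _ = g
  rw [← Category.assoc]
  rw [← Category.assoc] at h3
  exact h3

end CFback
section AdjCF

open Opposite CoherentFunctors

variable {A : Type u} [Category.{v} A] [Abelian A] {P : A → Prop}

noncomputable def Rfun (hcf : ContravariantlyFinite P) : A ⥤ ModC (Sub P) :=
  ObjectProperty.lift _ (restrictedYoneda P) (fp_of_cf hcf)

variable (L : ModC (Sub P) ⥤ A) (hL₂ : yonedaFP (Sub P) ⋙ L ≅ subIncl P)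

noncomputable def αhom (hcf : ContravariantlyFinite P) (M : ModC (Sub P)) (X : A)
    (φ : L.obj M ⟶ X) : M ⟶ (Rfun hcf).obj X :=
  ObjectProperty.homMk (show M.obj ⟶ (restrictedYoneda P).obj X from
  { app := fun c => AddCommGrpCat.ofHom (AddMonoidHom.mk'
      (fun m => hL₂.inv.app (unop c) ≫ L.map (yE (unop c) m) ≫ φ)
      (fun m m' => by
        show hL₂.inv.app (unop c) ≫ L.map (yE (unop c) (m + m')) ≫ φ = _
        rw [yE_add, L_map_add_rep L hL₂, Preadditive.add_comp, Preadditive.comp_add]; rfl))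
    naturality := by
      intro c c' u
      ext m
      show hL₂.inv.app (unop c') ≫ L.map (yE (unop c') (M.obj.map u m)) ≫ φ
        = (subIncl P).map u.unop ≫ hL₂.inv.app (unop c) ≫ L.map (yE (unop c) m) ≫ φ
      have e1 : M.obj.map u m = M.obj.map (u.unop).op m := rfl
      have e2 : yE (unop c') (M.obj.map (u.unop).op m)
          = (yonedaFP (Sub P)).map u.unop ≫ yE (unop c) m := (yE_comp_left u.unop m).symm
      rw [e1, e2, L.map_comp, L_map_y L hL₂]
      simp })

lemma αhom_app (hcf : ContravariantlyFinite P) {M : ModC (Sub P)} {X : A}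
    (φ : L.obj M ⟶ X) (c : (Sub P)ᵒᵖ) (m : M.obj.obj c) :
    ((modIncl (Sub P)).map (αhom L hL₂ hcf M X φ)).app c m
      = hL₂.inv.app (unop c) ≫ L.map (yE (unop c) m) ≫ φ := rfl

lemma αhom_bij (hL₁ : PreservesCokernels L) (hcf : ContravariantlyFinite P)
    (M : ModC (Sub P)) (X : A) : Function.Bijective (αhom L hL₂ hcf M X) := by
  constructor
  · intro φ φ' h
    set pr := pres M with hpr
    set u := ((modIncl (Sub P)).map pr.p).app (op pr.Yc) (𝟙 pr.Yc) with hu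
    have h1 := congrArg (fun (t : M ⟶ (Rfun hcf).obj X) =>
      ((modIncl (Sub P)).map t).app (op pr.Yc) u) h
    have hy : yE pr.Yc u = pr.p := yE_p pr
    simp only [αhom_app, hy] at h1
    haveI := epi_L_p L hL₁ pr
    exact (cancel_epi (L.map pr.p)).mp ((cancel_epi (hL₂.inv.app pr.Yc)).mp h1)
  · intro τ
    set pr := pres M with hpr
    set u := ((modIncl (Sub P)).map pr.p).app (op pr.Yc) (𝟙 pr.Yc) with hu
    set πX : pr.Yc.obj ⟶ X := ((modIncl (Sub P)).map τ).app (op pr.Yc) u with hπX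
    have e0 : ((modIncl (Sub P)).map pr.p).app (op pr.Xc) (𝟙 pr.Xc ≫ pr.f) = 0 := by
      have := congrArg (fun (t : (yonedaFP (Sub P)).obj pr.Xc ⟶ M) =>
        ((modIncl (Sub P)).map t).app (op pr.Xc) (𝟙 pr.Xc)) pr.w
      exact this
    have e1 : M.obj.map pr.f.op u = 0 := by
      rw [hu, map_via_p pr (𝟙 pr.Yc) pr.f]
      rw [show pr.f ≫ 𝟙 pr.Yc = 𝟙 pr.Xc ≫ pr.f by simp]
      exact e0
    have wfπ : (subIncl P).map pr.f ≫ πX = 0 := by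
      have e2 := NatTrans.naturality_apply (φ := (modIncl (Sub P)).map τ) (f := pr.f.op) u
      rw [show (((modIncl (Sub P)).obj M).map pr.f.op) u = 0 from e1,
        map_zero (ConcreteCategory.hom (((modIncl (Sub P)).map τ).app (op pr.Xc)))] at e2
      exact (show ((Rfun hcf).obj X).obj.map pr.f.op
        (((modIncl (Sub P)).map τ).app (op pr.Yc) u) = (subIncl P).map pr.f ≫ πX from rfl) ▸ e2.symm
    haveI := hL₁ ((yonedaFP (Sub P)).map pr.f)
    haveI := L_pzm L hL₂ hL₁
    have hcl := isColimitCoforkMapOfIsColimit' L pr.w pr.isColim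
    have wφ : L.map ((yonedaFP (Sub P)).map pr.f) ≫ (hL₂.hom.app pr.Yc ≫ πX) = 0 := by
      rw [L_map_y L hL₂]
      simp only [Category.assoc, Iso.inv_hom_id_app_assoc]
      rw [wfπ, comp_zero]
    let φ : L.obj M ⟶ X := hcl.desc (CokernelCofork.ofπ (hL₂.hom.app pr.Yc ≫ πX) wφ)
    have hfac : L.map pr.p ≫ φ = hL₂.hom.app pr.Yc ≫ πX :=
      hcl.fac (CokernelCofork.ofπ (hL₂.hom.app pr.Yc ≫ πX) wφ) WalkingParallelPair.one
    refine ⟨φ, ?_⟩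
    apply (modIncl (Sub P)).map_injective
    ext c m
    obtain ⟨C⟩ := c
    obtain ⟨n, hn⟩ := pr.surj (op C) m
    change C ⟶ pr.Yc at n
    have e3 : yE C m = (yonedaFP (Sub P)).map n ≫ pr.p := by
      rw [← hn]; exact yE_p_lift pr (n : C ⟶ pr.Yc)
    show hL₂.inv.app C ≫ L.map (yE C m) ≫ φ = ((modIncl (Sub P)).map τ).app (op C) m
    rw [e3]
    have e6 : L.map ((yonedaFP (Sub P)).map (n : C ⟶ pr.Yc) ≫ pr.p)
        = L.map ((yonedaFP (Sub P)).map (n : C ⟶ pr.Yc)) ≫ L.map pr.p := L.map_comp _ _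
    rw [e6, L_map_y L hL₂]
    simp only [Category.assoc]
    rw [hfac]
    simp only [Iso.inv_hom_id_app_assoc]
    have e4 : m = M.obj.map (n : C ⟶ pr.Yc).op u := by
      rw [hu, map_via_p pr (𝟙 pr.Yc) (n : C ⟶ pr.Yc), Category.comp_id]
      exact hn.symm
    rw [e4]
    have e5 := NatTrans.naturality_apply (φ := (modIncl (Sub P)).map τ)
      (f := (n : C ⟶ pr.Yc).op) u
    exact e5.symm

lemma αhom_natural_left (hcf : ContravariantlyFinite P) {M' M : ModC (Sub P)} (uf : M' ⟶ M)
    (X : A) (ψ : L.obj M ⟶ X) :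
    αhom L hL₂ hcf M' X (L.map uf ≫ ψ) = uf ≫ αhom L hL₂ hcf M X ψ := by
  apply (modIncl (Sub P)).map_injective
  ext c m
  obtain ⟨C⟩ := c
  show hL₂.inv.app C ≫ L.map (yE C m) ≫ L.map uf ≫ ψ
    = hL₂.inv.app C ≫ L.map (yE C (((modIncl (Sub P)).map uf).app (op C) m)) ≫ ψ
  rw [← yE_comp_right m uf, L.map_comp, Category.assoc]

lemma αhom_natural_right (hcf : ContravariantlyFinite P) {M : ModC (Sub P)} {X X' : A}
    (φ : L.obj M ⟶ X) (g : X ⟶ X') :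
    αhom L hL₂ hcf M X' (φ ≫ g) = αhom L hL₂ hcf M X φ ≫ (Rfun hcf).map g := by
  apply (modIncl (Sub P)).map_injective
  ext c m
  show hL₂.inv.app (unop c) ≫ L.map (yE (unop c) m) ≫ φ ≫ g
    = (hL₂.inv.app (unop c) ≫ L.map (yE (unop c) m) ≫ φ) ≫ g
  simp only [Category.assoc]

noncomputable def adjOfCF (hL₁ : PreservesCokernels L) (hcf : ContravariantlyFinite P) :
    L ⊣ Rfun hcf :=
  Adjunction.mkOfHomEquiv
  { homEquiv := fun M X => Equiv.ofBijective _ (αhom_bij L hL₂ hL₁ hcf M X)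
    homEquiv_naturality_left_symm := by
      intro M' M X uf g
      apply (Equiv.ofBijective _ (αhom_bij L hL₂ hL₁ hcf M' X)).injective
      rw [Equiv.apply_symm_apply]
      show _ = αhom L hL₂ hcf M' X _
      rw [αhom_natural_left L hL₂ hcf uf X]
      have : αhom L hL₂ hcf M X ((Equiv.ofBijective _ (αhom_bij L hL₂ hL₁ hcf M X)).symm g)
          = g := (Equiv.ofBijective _ (αhom_bij L hL₂ hL₁ hcf M X)).apply_symm_apply g
      rw [this]
    homEquiv_naturality_right := by
      intro M X X' φ g
      exact αhom_natural_right L hL₂ hcf φ g }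

end AdjCF
/-- **Statement 10.** Let `A` be an abelian category and `𝒞 ⊆ A` a full additive subcategory.
The right exact functor `mod 𝒞 ⥤ A` extending the inclusion admits a right adjoint iff `𝒞` is
contravariantly finite in `A`; in that case the right adjoint is given by `X ↦ Hom(-,X)|_𝒞`,
and `𝒞` is contravariantly finite iff `Hom(-,X)|_𝒞 ∈ mod 𝒞` for every `X ∈ A`. -/
theorem statement10 (A : Type u) [Category.{v} A] [Abelian A] (P : A → Prop)
    (hP0 : P 0) (hPadd : ∀ X Y : A, P X → P Y → P (X ⊞ Y))
    (L : ModC (Sub P) ⥤ A) (hL₁ : PreservesCokernels L)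
    (hL₂ : yonedaFP (Sub P) ⋙ L ≅ subIncl P) :
    ((∃ Radj : A ⥤ ModC (Sub P), Nonempty (L ⊣ Radj)) ↔ ContravariantlyFinite P) ∧
    (ContravariantlyFinite P →
      ∀ Radj : A ⥤ ModC (Sub P), Nonempty (L ⊣ Radj) →
        Nonempty (Radj ⋙ modIncl (Sub P) ≅ restrictedYoneda P)) ∧
    (ContravariantlyFinite P ↔ ∀ X : A, IsFP ((restrictedYoneda P).obj X)) := by
  refine ⟨⟨?_, ?_⟩, ?_, ⟨fun hcf X => fp_of_cf hcf X, cf_of_fp⟩⟩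
  · rintro ⟨Radj, ⟨adj⟩⟩
    exact cf_of_adj L hL₂ adj
  · intro hcf
    exact ⟨Rfun hcf, ⟨adjOfCF L hL₂ hL₁ hcf⟩⟩
  · intro hcf Radj hne
    obtain ⟨adj⟩ := hne
    exact ⟨(Functor.isoWhiskerRight (adj.rightAdjointUniq (adjOfCF L hL₂ hL₁ hcf)) (modIncl (Sub P))).trans
      (ObjectProperty.liftCompιIso _ _ _)⟩
end
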